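/- Characteristic polynomial of the symbol: let m, n, v, u, p_m, p_n ∈ ℝ with n ≠ 0, let ξ = (ξ₁, ξ₂) ∈ ℝ², and set w := vξ₁ + uξ₂. Then for every λ ∈ ℝ, det(λ·I₄ − (ξ₁A₁(U) + ξ₂A₂(U))) = (λ − w)²·((λ − w)² − ((m·p_m + n·p_n)/n)·(ξ₁² + ξ₂²)). -/

import Mathlib

/-- The coefficient matrix `A₁(U)` of the quasilinear two-phase flow system,
for `U = (m,n,v,u)` and pressure partial derivatives `pm, pn`. -/
noncomputable def A1 (m n v u pm pn : ℝ) : Matrix (Fin 4) (Fin 4) ℝ :=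
  !![v, 0, m, 0;
     0, v, n, 0;
     pm / n, pn / n, v, 0;
     0, 0, 0, v]

/-- The coefficient matrix `A₂(U)` of the quasilinear two-phase flow system. -/
noncomputable def A2 (m n v u pm pn : ℝ) : Matrix (Fin 4) (Fin 4) ℝ :=
  !![u, 0, 0, m;
     0, u, 0, n;
     0, 0, u, 0;
     pm / n, pn / n, 0, u]

set_option maxHeartbeats 2000000 in
/-- Characteristic polynomial of the symbol `ξ₁A₁(U) + ξ₂A₂(U)`:
`det(λI₄ − (ξ₁A₁ + ξ₂A₂)) = (λ−w)²((λ−w)² − ((m·p_m+n·p_n)/n)(ξ₁²+ξ₂²))`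
where `w = vξ₁ + uξ₂`. -/
theorem charpoly_symbol (m n v u pm pn ξ1 ξ2 lam : ℝ) (hn : n ≠ 0) :
    (lam • (1 : Matrix (Fin 4) (Fin 4) ℝ)
        - (ξ1 • A1 m n v u pm pn + ξ2 • A2 m n v u pm pn)).det
      = (lam - (v * ξ1 + u * ξ2)) ^ 2 *
        ((lam - (v * ξ1 + u * ξ2)) ^ 2
          - ((m * pm + n * pn) / n) * (ξ1 ^ 2 + ξ2 ^ 2)) := by
  have h : (lam • (1 : Matrix (Fin 4) (Fin 4) ℝ)
        - (ξ1 • A1 m n v u pm pn + ξ2 • A2 m n v u pm pn))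
      = !![lam - ξ1*v - ξ2*u, 0, -(ξ1*m), -(ξ2*m);
           0, lam - ξ1*v - ξ2*u, -(ξ1*n), -(ξ2*n);
           -(ξ1*(pm/n)), -(ξ1*(pn/n)), lam - ξ1*v - ξ2*u, 0;
           -(ξ2*(pm/n)), -(ξ2*(pn/n)), 0, lam - ξ1*v - ξ2*u] := by
    ext i j
    fin_cases i <;> fin_cases j <;>
      simp [A1, A2, Matrix.one_apply] <;> ring
  rw [h]
  rw [Matrix.det_succ_row_zero]
  simp only [Fin.sum_univ_succ, Fin.sum_univ_zero, Matrix.det_succ_row_zero, Fin.isValue,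
    Matrix.cons_val', Matrix.cons_val_zero, Matrix.cons_val_one, Matrix.head_cons,
    Matrix.empty_val', Matrix.cons_val_fin_one, Matrix.submatrix_apply, Fin.succ_zero_eq_one,
    Fin.succ_one_eq_two, Matrix.head_fin_const, Matrix.cons_val_succ, Matrix.det_fin_one,
    Matrix.cons_val_two, Matrix.tail_cons, Matrix.cons_val_three, Fin.val_zero, Fin.val_succ,
    Fin.succAbove_zero, Matrix.submatrix_submatrix, Function.comp_def,
    Matrix.det_fin_zero, pow_zero, one_mul, Fin.zero_succAbove, Fin.succ_succAbove_zero,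
    Fin.succ_succAbove_one, Matrix.det_fin_one_of, neg_neg, neg_zero, zero_mul, mul_zero,
    add_zero, zero_add, mul_one, mul_neg, neg_mul, pow_succ, one_pow]
  simp only [show ((2:Fin 4).succAbove 2) = 3 by decide,
    show (Fin.castSucc (2:Fin 3)) = (2:Fin 4) by decide,
    show ((1:Fin 4).succAbove 2) = 3 by decide, show ((3:Fin 4).succAbove 2) = 2 by decide,
    Matrix.cons_val_zero, Matrix.cons_val_one, Matrix.head_cons, Matrix.cons_val_two,
    Matrix.tail_cons, Matrix.cons_val_three]
  norm_num [Fin.succAbove, Fin.castSucc, Fin.castAdd, Fin.castLE, Fin.lt_def]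
  simp only [Matrix.cons_val]
  field_simp
  ring
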